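/- arXiv:0806.1033 — 4 statements merged into one kernel-verified Lean document; each statement's English description precedes it below -/
import Mathlib

section
/- Let S be a set and for each s ∈ S let k_s be a field. Every maximal ideal of the product ring ∏_{s∈S} k_s is of the form I_U = {f : {s : f_s = 0} ∈ U} for some ultrafilter U on S. -/
open scoped Classical

/-- Every maximal ideal of a product of fields `Π s, k s` is of the
form `I_U = {f | {s | f s = 0} ∈ U}` for some ultrafilter `U` on `S`. -/
theorem duBois_stmt4 (S : Type*) (k : S → Type*) [∀ s, Field (k s)]
    (I : Ideal (∀ s, k s)) (hI : I.IsMaximal) :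
    ∃ U : Ultrafilter S, ∀ f : ∀ s, k s, f ∈ I ↔ {s | f s = 0} ∈ U := by
  classical
  -- idempotent supported on A
  set e : Set S → ∀ s, k s := fun A s => if s ∈ A then 1 else 0 with he
  have hPrime : I.IsPrime := hI.isPrime
  -- key dichotomy
  have dichot : ∀ A : Set S, e A ∈ I ∨ e Aᶜ ∈ I := by
    intro A
    have : e A * e Aᶜ ∈ I := by
      have : e A * e Aᶜ = 0 := by
        funext s; by_cases h : s ∈ A <;> simp [he, h]
      simp [this]
    exact hPrime.mem_or_mem this
  have notboth : ∀ A : Set S, e A ∈ I → e Aᶜ ∈ I → False := by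
    intro A h1 h2
    have : (1 : ∀ s, k s) ∈ I := by
      have : e A + e Aᶜ = 1 := by
        funext s; by_cases h : s ∈ A <;> simp [he, h]
      rw [← this]; exact I.add_mem h1 h2
    exact hI.ne_top (I.eq_top_iff_one.2 this)
  -- the filter
  have mono : ∀ A B : Set S, A ⊆ B → e Aᶜ ∈ I → e Bᶜ ∈ I := by
    intro A B hAB h
    have : e Bᶜ = e Aᶜ * e Bᶜ := by
      funext s; by_cases hs : s ∈ B
      · simp [he, hs]
      · have : s ∉ A := fun hsa => hs (hAB hsa)
        simp [he, hs, this]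
    rw [this]; exact I.mul_mem_right _ h
  let F : Filter S :=
    { sets := {A | e Aᶜ ∈ I}
      univ_sets := by
        have h0 : e (Set.univ : Set S)ᶜ = 0 := by funext s; simp [he]
        show e (Set.univ : Set S)ᶜ ∈ I
        rw [h0]; exact I.zero_mem
      sets_of_superset := fun {A B} hA hAB => mono A B hAB hA
      inter_sets := fun {A B} hA hB => by
        have : e (A ∩ B)ᶜ = e Aᶜ + e Bᶜ - e Aᶜ * e Bᶜ := by
          funext s
          by_cases h1 : s ∈ A <;> by_cases h2 : s ∈ B <;>
            simp [he, h1, h2]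
        show e (A ∩ B)ᶜ ∈ I
        rw [this]
        exact I.sub_mem (I.add_mem hA hB) (I.mul_mem_right _ hA) }
  have hmemF : ∀ A : Set S, A ∈ F ↔ e Aᶜ ∈ I := fun A => Iff.rfl
  refine ⟨Ultrafilter.ofComplNotMemIff F ?_, ?_⟩
  · intro A
    rw [hmemF, hmemF, compl_compl]
    constructor
    · intro h
      rcases dichot A with h1 | h1
      · exact absurd h1 h
      · exact h1
    · intro h hc
      exact notboth A hc h
  · intro f
    show f ∈ I ↔ e {s | f s = 0}ᶜ ∈ I
    constructor
    · intro hf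
      have : e {s | f s = 0}ᶜ = f * fun s => (f s)⁻¹ := by
        funext s
        by_cases h : f s = 0 <;> simp [he, h]
      rw [this]; exact I.mul_mem_right _ hf
    · intro h
      have : f = e {s | f s = 0}ᶜ * f := by
        funext s
        by_cases h : f s = 0 <;> simp [he, h]
      rw [this]; exact I.mul_mem_right _ h
end

section
/- Let S be a set and for each s ∈ S let k_s be a field. Every prime ideal of the product ring ∏_{s∈S} k_s is maximal, and arises as I_U for an ultrafilter U on S. -/
/-- Every prime ideal of a product of fields `Π s, k s` is maximal,
and arises as `I_U = {f | {s | f s = 0} ∈ U}` for some ultrafilter `U` on `S`. -/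
theorem duBois_stmt5 (S : Type*) (k : S → Type*) [∀ s, Field (k s)]
    (I : Ideal (∀ s, k s)) (hI : I.IsPrime) :
    I.IsMaximal ∧ ∃ U : Ultrafilter S, ∀ f : ∀ s, k s, f ∈ I ↔ {s | f s = 0} ∈ U := by
  classical
  let χ : Set S → (∀ s, k s) := fun T s => if s ∈ T then (0 : k s) else 1
  have hχ_univ : χ Set.univ = 0 := by funext s; simp [χ]
  have hχ_mono : ∀ {T T' : Set S}, T ⊆ T' → χ T ∈ I → χ T' ∈ I := by
    intro T T' hTT' h
    have : χ T' = χ T * χ T' := by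
      funext s
      by_cases hs : s ∈ T
      · simp [χ, hs, hTT' hs]
      · simp [χ, hs]
    rw [this]
    exact I.mul_mem_right _ h
  have hχ_inter : ∀ {T T' : Set S}, χ T ∈ I → χ T' ∈ I → χ (T ∩ T') ∈ I := by
    intro T T' h h'
    have : χ (T ∩ T') = χ T + χ T' - χ T * χ T' := by
      funext s
      by_cases hs : s ∈ T <;> by_cases hs' : s ∈ T' <;> simp [χ, hs, hs']
    rw [this]
    exact I.sub_mem (I.add_mem h h') (I.mul_mem_right _ h)
  have hχ_compl : ∀ T : Set S, χ T ∈ I ∨ χ Tᶜ ∈ I := by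
    intro T
    apply hI.mem_or_mem
    have : χ T * χ Tᶜ = 0 := by
      funext s; by_cases hs : s ∈ T <;> simp [χ, hs]
    rw [this]; exact I.zero_mem
  have hχ_empty : χ (∅ : Set S) ∉ I := by
    intro h
    apply hI.ne_top
    have : χ (∅ : Set S) = 1 := by funext s; simp [χ]
    rw [this] at h
    exact I.eq_top_of_isUnit_mem h isUnit_one
  have hmem : ∀ f : ∀ s, k s, f ∈ I ↔ χ {s | f s = 0} ∈ I := by
    intro f
    constructor
    · intro hf
      have : χ {s | f s = 0} = f * (fun s => (f s)⁻¹) := by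
        funext s
        by_cases hs : f s = 0
        · simp [χ, hs]
        · simp [χ, hs, mul_inv_cancel₀ hs]
      rw [this]; exact I.mul_mem_right _ hf
    · intro h
      have : f = f * χ {s | f s = 0} := by
        funext s
        by_cases hs : f s = 0
        · simp [χ, hs]
        · simp [χ, hs]
      rw [this]; exact I.mul_mem_left _ h
  let F : Filter S :=
    { sets := {T | χ T ∈ I}
      univ_sets := by simp [hχ_univ]
      sets_of_superset := fun h hsub => hχ_mono hsub h
      inter_sets := fun h h' => hχ_inter h h' }
  have hFmem : ∀ T : Set S, T ∈ F ↔ χ T ∈ I := fun T => Iff.rfl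
  let U : Ultrafilter S := Ultrafilter.ofComplNotMemIff F (by
    intro T
    constructor
    · intro h
      rcases hχ_compl T with h' | h'
      · exact h'
      · exact absurd h' h
    · intro hT hTc
      exact hχ_empty (by simpa using hχ_inter hT hTc))
  refine ⟨?_, U, ?_⟩
  · rw [Ideal.isMaximal_iff]
    refine ⟨fun h => hI.ne_top (I.eq_top_of_isUnit_mem h isUnit_one), ?_⟩
    intro J f hIJ hfI hfJ
    have h1 : (1 : ∀ s, k s) - f * (fun s => (f s)⁻¹) = χ {s | f s = 0}ᶜ := by
      funext s
      by_cases hs : f s = 0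
      · simp [χ, hs]
      · simp [χ, hs, mul_inv_cancel₀ hs]
    have hZ : χ {s | f s = 0} ∉ I := fun h => hfI ((hmem f).2 h)
    have hZc : χ {s | f s = 0}ᶜ ∈ I := (hχ_compl _).resolve_left hZ
    have hJ1 : (1 : ∀ s, k s) - f * (fun s => (f s)⁻¹) ∈ J := hIJ (h1 ▸ hZc)
    have h2 : f * (fun s => (f s)⁻¹) ∈ J := J.mul_mem_right _ hfJ
    have := J.add_mem hJ1 h2
    simpa using this
  · intro f
    rw [hmem f]
    exact Iff.rfl
end

section
/- Let U be a filter on a set S, k_s fields, and for each s a cochain complex C_s^• of k_s-vector spaces. Then the cohomology of the filter product complex commutes with the quotient: H^i(∏_s C_s^• ⊗_{∏ k_s} (∏ k_s / U)) ≅ (∏_s H^i(C_s^•)) / U. -/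
/-- The subgroup of a product of abelian groups consisting of families
vanishing on a set of the filter `F`. -/
def filterAddSubgroup (S : Type*) (F : Filter S) (V : S → Type*)
    [∀ s, AddCommGroup (V s)] : AddSubgroup (∀ s, V s) where
  carrier := {v | {s | v s = 0} ∈ F}
  zero_mem' := by simp
  add_mem' := by
    intro a b ha hb
    exact Filter.mem_of_superset (Filter.inter_mem ha hb) fun s hs => by
      have h1 : a s = 0 := hs.1
      have h2 : b s = 0 := hs.2
      show a s + b s = 0
      simp [h1, h2]
  neg_mem' := by
    intro a ha
    exact Filter.mem_of_superset ha fun s hs => by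
      have h1 : a s = 0 := hs
      show -a s = 0
      simp [h1]

/-- The componentwise map on products induced by a family of additive maps. -/
def piAddHom {S : Type*} {A B : S → Type*} [∀ s, AddCommGroup (A s)]
    [∀ s, AddCommGroup (B s)] (f : ∀ s, A s →+ B s) : (∀ s, A s) →+ (∀ s, B s) where
  toFun a s := f s (a s)
  map_zero' := by ext s; simp
  map_add' a b := by ext s; simp

theorem piAddHom_le {S : Type*} (U : Filter S) {A B : S → Type*}
    [∀ s, AddCommGroup (A s)] [∀ s, AddCommGroup (B s)] (f : ∀ s, A s →+ B s) :
    filterAddSubgroup S U A ≤ (filterAddSubgroup S U B).comap (piAddHom f) := by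
  intro a ha
  exact Filter.mem_of_superset ha fun s hs => by
    have h1 : a s = 0 := hs
    show f s (a s) = 0
    simp [h1]

/-- cohomology commutes with filter products.  We model the
cochain complexes `C_s^•` of `k_s`-vector spaces around a fixed degree `i` by
three terms `A s → B s → C s` with composite zero, so that
`H^i(C_s^•) = ker (g s) / im (f s)`.  The filter product complex
`∏ C_s^• ⊗_{∏ k_s} (∏ k_s / U)` is the complex of quotients by the subgroups
of families vanishing along `U` (tensoring with `∏ k_s / U` is exactly this
quotient), and the theorem asserts that its cohomology is isomorphic to the
filter product `(∏_s H^i(C_s^•)) / U` of the cohomologies. -/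
theorem duBois_stmt15 (S : Type*) (U : Filter S) [U.NeBot]
    (k : S → Type*) [∀ s, Field (k s)]
    (A B C : S → Type*)
    [∀ s, AddCommGroup (A s)] [∀ s, AddCommGroup (B s)] [∀ s, AddCommGroup (C s)]
    [∀ s, Module (k s) (A s)] [∀ s, Module (k s) (B s)] [∀ s, Module (k s) (C s)]
    (f : ∀ s, A s →ₗ[k s] B s) (g : ∀ s, B s →ₗ[k s] C s)
    (hfg : ∀ s, (g s).comp (f s) = 0) :
    Nonempty (
      -- cohomology of the filter product complex
      ((AddMonoidHom.ker
          (QuotientAddGroup.map (filterAddSubgroup S U B) (filterAddSubgroup S U C)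
            (piAddHom fun s => (g s).toAddMonoidHom) (piAddHom_le U _))) ⧸
        (AddMonoidHom.range
          (QuotientAddGroup.map (filterAddSubgroup S U A) (filterAddSubgroup S U B)
            (piAddHom fun s => (f s).toAddMonoidHom) (piAddHom_le U _))).addSubgroupOf
          (AddMonoidHom.ker
            (QuotientAddGroup.map (filterAddSubgroup S U B) (filterAddSubgroup S U C)
              (piAddHom fun s => (g s).toAddMonoidHom) (piAddHom_le U _))))
      ≃+
      -- filter product of the cohomologies
      ((∀ s, (AddMonoidHom.ker (g s).toAddMonoidHom ⧸
          (AddMonoidHom.range (f s).toAddMonoidHom).addSubgroupOf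
            (AddMonoidHom.ker (g s).toAddMonoidHom))) ⧸
        filterAddSubgroup S U (fun s => AddMonoidHom.ker (g s).toAddMonoidHom ⧸
          (AddMonoidHom.range (f s).toAddMonoidHom).addSubgroupOf
            (AddMonoidHom.ker (g s).toAddMonoidHom)))) := by
  classical
  constructor
  set gbar := QuotientAddGroup.map (filterAddSubgroup S U B) (filterAddSubgroup S U C)
      (piAddHom fun s => (g s).toAddMonoidHom) (piAddHom_le U _) with hgbar
  set fbar := QuotientAddGroup.map (filterAddSubgroup S U A) (filterAddSubgroup S U B)
      (piAddHom fun s => (f s).toAddMonoidHom) (piAddHom_le U _) with hfbar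
  set K := AddMonoidHom.ker gbar with hK
  set R := (AddMonoidHom.range fbar).addSubgroupOf K with hR
  set H : S → Type _ := fun s => (AddMonoidHom.ker (g s).toAddMonoidHom ⧸
      (AddMonoidHom.range (f s).toAddMonoidHom).addSubgroupOf
        (AddMonoidHom.ker (g s).toAddMonoidHom)) with hH
  set P : AddSubgroup (∀ s, B s) :=
    (filterAddSubgroup S U C).comap (piAddHom fun s => (g s).toAddMonoidHom) with hP
  have memP : ∀ b : ∀ s, B s, b ∈ P ↔ {s | g s (b s) = 0} ∈ U := fun b => Iff.rfl
  -- truncation to the kernel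
  let tr : (∀ s, B s) → ∀ s, ↥(AddMonoidHom.ker (g s).toAddMonoidHom) := fun b s =>
    if h : g s (b s) = 0 then ⟨b s, h⟩ else 0
  have tr_eq : ∀ (b : ∀ s, B s) (s : S) (h : g s (b s) = 0), tr b s = ⟨b s, h⟩ := by
    intro b s h; simp only [tr, dif_pos h]
  let fam : (∀ s, B s) → ∀ s, H s := fun b s => QuotientAddGroup.mk (tr b s)
  -- θ : P →+ (∏ H) / U
  let θ : ↥P →+ ((∀ s, H s) ⧸ filterAddSubgroup S U H) :=
    { toFun := fun b => QuotientAddGroup.mk (fam b.1)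
      map_zero' := by
        have h : fam (0 : ∀ s, B s) = 0 := by
          funext s
          have h0 : g s ((0 : ∀ s, B s) s) = 0 := by simp
          show QuotientAddGroup.mk (tr 0 s) = 0
          rw [tr_eq 0 s h0]
          exact congrArg QuotientAddGroup.mk (Subtype.ext rfl)
        show QuotientAddGroup.mk (fam (0 : ∀ s, B s)) = 0
        rw [h]; rfl
      map_add' := by
        intro b c
        show QuotientAddGroup.mk (fam (b.1 + c.1)) =
          QuotientAddGroup.mk (fam b.1) + QuotientAddGroup.mk (fam c.1)
        rw [← QuotientAddGroup.mk_add, QuotientAddGroup.eq]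
        show {s | (-fam (b.1 + c.1) + (fam b.1 + fam c.1)) s = 0} ∈ U
        refine Filter.mem_of_superset (Filter.inter_mem b.2 c.2) ?_
        rintro s ⟨hb : g s (b.1 s) = 0, hc : g s (c.1 s) = 0⟩
        have hbc : g s ((b.1 + c.1) s) = 0 := by
          show g s (b.1 s + c.1 s) = 0
          rw [map_add, hb, hc, add_zero]
        have e1 : fam (b.1 + c.1) s = fam b.1 s + fam c.1 s := by
          show QuotientAddGroup.mk (tr (b.1 + c.1) s) =
            QuotientAddGroup.mk (tr b.1 s) + QuotientAddGroup.mk (tr c.1 s)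
          rw [tr_eq _ s hbc, tr_eq _ s hb, tr_eq _ s hc, ← QuotientAddGroup.mk_add]
          exact congrArg QuotientAddGroup.mk (Subtype.ext rfl)
        show -fam (b.1 + c.1) s + (fam b.1 s + fam c.1 s) = 0
        rw [e1, neg_add_cancel] }
  -- θ is surjective
  have θsurj : Function.Surjective θ := by
    intro y
    obtain ⟨h, rfl⟩ := QuotientAddGroup.mk_surjective y
    choose rep hrep using fun s => QuotientAddGroup.mk_surjective (h s)
    have hmem : (fun s => ((rep s : ↥(AddMonoidHom.ker (g s).toAddMonoidHom)) : B s)) ∈ P := by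
      rw [memP]
      exact Filter.univ_mem' fun s => (rep s).2
    refine ⟨⟨_, hmem⟩, ?_⟩
    show QuotientAddGroup.mk (fam _) = QuotientAddGroup.mk h
    congr 1
    funext s
    show QuotientAddGroup.mk (tr _ s) = h s
    rw [tr_eq _ s (show g s ((rep s : B s)) = 0 from (rep s).2), ← hrep s]
  -- π : P →+ K
  have gbar_mk : ∀ b : ∀ s, B s, gbar (QuotientAddGroup.mk b) =
      QuotientAddGroup.mk (piAddHom (fun s => (g s).toAddMonoidHom) b) := fun b => rfl
  have fbar_mk : ∀ a : ∀ s, A s, fbar (QuotientAddGroup.mk a) =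
      QuotientAddGroup.mk (piAddHom (fun s => (f s).toAddMonoidHom) a) := fun a => rfl
  let π : ↥P →+ ↥K :=
    { toFun := fun b => ⟨QuotientAddGroup.mk b.1, by
        rw [AddMonoidHom.mem_ker, gbar_mk, QuotientAddGroup.eq_zero_iff]
        exact b.2⟩
      map_zero' := rfl
      map_add' := fun a b => rfl }
  have πsurj : Function.Surjective π := by
    rintro ⟨x, hx⟩
    obtain ⟨b, rfl⟩ := QuotientAddGroup.mk_surjective x
    rw [AddMonoidHom.mem_ker, gbar_mk, QuotientAddGroup.eq_zero_iff] at hx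
    exact ⟨⟨b, hx⟩, rfl⟩
  let π' : ↥P →+ (↥K ⧸ R) := (QuotientAddGroup.mk' R).comp π
  have π'surj : Function.Surjective π' :=
    (QuotientAddGroup.mk'_surjective R).comp πsurj
  -- the two kernels coincide
  have hker : AddMonoidHom.ker π' = AddMonoidHom.ker θ := by
    ext b
    rw [AddMonoidHom.mem_ker, AddMonoidHom.mem_ker]
    have hπ' : π' b = QuotientAddGroup.mk (π b) := rfl
    constructor
    · intro hb
      rw [hπ', QuotientAddGroup.eq_zero_iff] at hb
      rw [hR, AddSubgroup.mem_addSubgroupOf] at hb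
      obtain ⟨x, hx⟩ := hb
      obtain ⟨a, rfl⟩ := QuotientAddGroup.mk_surjective x
      rw [fbar_mk] at hx
      have hx' := QuotientAddGroup.eq.mp hx
      show QuotientAddGroup.mk (fam b.1) = 0
      rw [QuotientAddGroup.eq_zero_iff]
      show {s | fam b.1 s = 0} ∈ U
      refine Filter.mem_of_superset hx' ?_
      intro s hs
      have hfs : f s (a s) = b.1 s := by
        have h0 : -(f s (a s)) + b.1 s = 0 := hs
        exact neg_add_eq_zero.mp h0
      have hg0 : g s (b.1 s) = 0 := by
        rw [← hfs]
        exact DFunLike.congr_fun (hfg s) (a s)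
      show fam b.1 s = 0
      show QuotientAddGroup.mk (tr b.1 s) = 0
      rw [tr_eq _ s hg0, QuotientAddGroup.eq_zero_iff, AddSubgroup.mem_addSubgroupOf]
      exact ⟨a s, hfs⟩
    · intro hb
      have hb' : {s | fam b.1 s = 0} ∈ U := by
        have := hb
        rw [show θ b = QuotientAddGroup.mk (fam b.1) from rfl,
          QuotientAddGroup.eq_zero_iff] at this
        exact this
      let a : ∀ s, A s := fun s => if h : ∃ x, f s x = b.1 s then h.choose else 0
      have key : {s | (-(piAddHom (fun s => (f s).toAddMonoidHom) a) + b.1) s = 0} ∈ U := by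
        refine Filter.mem_of_superset (Filter.inter_mem hb' b.2) ?_
        rintro s ⟨h1 : fam b.1 s = 0, h2 : g s (b.1 s) = 0⟩
        have h1' : QuotientAddGroup.mk (tr b.1 s) = 0 := h1
        rw [tr_eq _ s h2, QuotientAddGroup.eq_zero_iff, AddSubgroup.mem_addSubgroupOf] at h1'
        have hex : ∃ x, f s x = b.1 s := h1'
        have hfa : f s (a s) = b.1 s := by
          simp only [a, dif_pos hex]
          exact hex.choose_spec
        show -(f s (a s)) + b.1 s = 0
        rw [hfa, neg_add_cancel]
      rw [hπ', QuotientAddGroup.eq_zero_iff, hR, AddSubgroup.mem_addSubgroupOf]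
      refine ⟨QuotientAddGroup.mk a, ?_⟩
      rw [fbar_mk]
      exact QuotientAddGroup.eq.mpr key
  exact ((QuotientAddGroup.quotientKerEquivOfSurjective π' π'surj).symm.trans
    ((QuotientAddGroup.quotientAddEquivOfEq hker).trans
      (QuotientAddGroup.quotientKerEquivOfSurjective θ θsurj)))
end

section
/- Let U be an ultrafilter on a set S and k_s fields. Inside the ring ∏_s (k_s[x_0,…,x_n]) / U there is a natural embedding of the polynomial ring (∏_s k_s / U)[x_0,…,x_n], whose image consists exactly of the classes of families (f_s) of finite degree, i.e. those for which there exists d ∈ ℕ with deg f_s ≤ d for almost all s (with respect to U). -/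
/-- The ideal of a product ring consisting of families vanishing on a set of `F`. -/
def filterIdeal (S : Type*) (F : Filter S) (k : S → Type*) [∀ s, CommRing (k s)] :
    Ideal (∀ s, k s) where
  carrier := {f | {s | f s = 0} ∈ F}
  zero_mem' := by simp
  add_mem' := by
    intro a b ha hb
    exact Filter.mem_of_superset (Filter.inter_mem ha hb) fun s hs => by
      have h1 : a s = 0 := hs.1
      have h2 : b s = 0 := hs.2
      show a s + b s = 0
      simp [h1, h2]
  smul_mem' := by
    intro c f hf
    exact Filter.mem_of_superset hf fun s hs => by
      have h1 : f s = 0 := hs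
      show c s * f s = 0
      simp [h1]

set_option maxHeartbeats 1000000
set_option synthInstance.maxHeartbeats 200000

/-- For an ultrafilter `U` on `S` and fields `k s`, the polynomial
ring in variables `x_0, …, x_n` over the ultraproduct `∏ k_s / U` embeds
naturally into the ultraproduct `∏_s (k_s[x_0,…,x_n]) / U`, sending constants
and variables to the classes of the corresponding constant families, and its
image consists exactly of the classes of families `(f_s)` of finite degree,
i.e. those with `deg f_s ≤ d` for almost all `s` for some `d ∈ ℕ`. -/
theorem duBois_stmt17 (S : Type*) (k : S → Type*) [∀ s, Field (k s)]
    (U : Ultrafilter S) (n : ℕ) :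
    ∃ φ : MvPolynomial (Fin (n + 1)) ((∀ s, k s) ⧸ filterIdeal S (U : Filter S) k) →+*
        ((∀ s, MvPolynomial (Fin (n + 1)) (k s)) ⧸
          filterIdeal S (U : Filter S) (fun s => MvPolynomial (Fin (n + 1)) (k s))),
      Function.Injective φ ∧
      (∀ a : ∀ s, k s,
        φ (MvPolynomial.C (Ideal.Quotient.mk (filterIdeal S (U : Filter S) k) a)) =
          Ideal.Quotient.mk
            (filterIdeal S (U : Filter S) (fun s => MvPolynomial (Fin (n + 1)) (k s)))
            (fun s => MvPolynomial.C (a s))) ∧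
      (∀ i : Fin (n + 1),
        φ (MvPolynomial.X i) =
          Ideal.Quotient.mk
            (filterIdeal S (U : Filter S) (fun s => MvPolynomial (Fin (n + 1)) (k s)))
            (fun _s => MvPolynomial.X i)) ∧
      Set.range φ = {q | ∃ f : ∀ s, MvPolynomial (Fin (n + 1)) (k s),
        Ideal.Quotient.mk
            (filterIdeal S (U : Filter S) (fun s => MvPolynomial (Fin (n + 1)) (k s))) f = q ∧
        ∃ d : ℕ, {s | (f s).totalDegree ≤ d} ∈ U} := by
  classical
  set I := filterIdeal S (U : Filter S) k with hI
  set J := filterIdeal S (U : Filter S) (fun s => MvPolynomial (Fin (n + 1)) (k s)) with hJ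
  -- the base ring hom on constants
  have hker : ∀ a ∈ I, (Ideal.Quotient.mk J)
      ((Pi.ringHom fun s => (MvPolynomial.C).comp (Pi.evalRingHom k s)) a) = 0 := by
    intro a ha
    rw [Ideal.Quotient.eq_zero_iff_mem]
    refine Filter.mem_of_superset ha fun s hs => ?_
    have : a s = 0 := hs
    show MvPolynomial.C (a s) = 0
    simp [this]
  set base : ((∀ s, k s) ⧸ I) →+* ((∀ s, MvPolynomial (Fin (n + 1)) (k s)) ⧸ J) :=
    Ideal.Quotient.lift I ((Ideal.Quotient.mk J).comp
      (Pi.ringHom fun s => (MvPolynomial.C).comp (Pi.evalRingHom k s))) hker with hbase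
  set φ : MvPolynomial (Fin (n + 1)) ((∀ s, k s) ⧸ I) →+*
      ((∀ s, MvPolynomial (Fin (n + 1)) (k s)) ⧸ J) :=
    MvPolynomial.eval₂Hom base (fun i => Ideal.Quotient.mk J (fun _s => MvPolynomial.X i))
    with hphi
  have hbaseval : ∀ a : ∀ s, k s, base (Ideal.Quotient.mk I a) =
      Ideal.Quotient.mk J (fun s => MvPolynomial.C (a s)) := by
    intro a
    rw [hbase, Ideal.Quotient.lift_mk]
    rfl
  have hC : ∀ a : ∀ s, k s, φ (MvPolynomial.C (Ideal.Quotient.mk I a)) =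
      Ideal.Quotient.mk J (fun s => MvPolynomial.C (a s)) := by
    intro a
    rw [hphi, MvPolynomial.eval₂Hom_C, hbaseval]
  have hX : ∀ i : Fin (n + 1), φ (MvPolynomial.X i) =
      Ideal.Quotient.mk J (fun _s => MvPolynomial.X i) := by
    intro i
    rw [hphi, MvPolynomial.eval₂Hom_X']
  -- key computation on monomials
  have hmon : ∀ (m : Fin (n + 1) →₀ ℕ) (g : ∀ s, k s),
      φ (MvPolynomial.monomial m (Ideal.Quotient.mk I g)) =
        Ideal.Quotient.mk J (fun s => MvPolynomial.monomial m (g s)) := by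
    intro m g
    rw [MvPolynomial.monomial_eq, map_mul, Finsupp.prod, map_prod, hC]
    have h1 : ∀ i ∈ m.support, φ (MvPolynomial.X i ^ m i) =
        Ideal.Quotient.mk J
          ((fun _s => (MvPolynomial.X i : MvPolynomial (Fin (n+1)) (k _s))) ^ m i) := by
      intro i _
      rw [map_pow, hX, map_pow]
    rw [Finset.prod_congr rfl h1, ← map_prod (Ideal.Quotient.mk J), ← map_mul]
    congr 1
    funext s
    rw [Pi.mul_apply, Finset.prod_apply, MvPolynomial.monomial_eq, Finsupp.prod]
    rfl
  -- choice of representatives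
  set rep : ((∀ s, k s) ⧸ I) → (∀ s, k s) :=
    Function.surjInv Ideal.Quotient.mk_surjective with hrepdef
  have hrep : ∀ c, Ideal.Quotient.mk I (rep c) = c := fun c =>
    Function.surjInv_eq Ideal.Quotient.mk_surjective c
  -- the canonical family attached to a polynomial
  set Fam : MvPolynomial (Fin (n + 1)) ((∀ s, k s) ⧸ I) → ∀ s, MvPolynomial (Fin (n + 1)) (k s) :=
    fun p s => ∑ m ∈ p.support, MvPolynomial.monomial m (rep (p.coeff m) s) with hFam
  have hphiFam : ∀ p, φ p = Ideal.Quotient.mk J (Fam p) := by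
    intro p
    conv_lhs => rw [← p.support_sum_monomial_coeff]
    rw [map_sum]
    have h1 : ∀ m ∈ p.support, φ (MvPolynomial.monomial m (p.coeff m)) =
        Ideal.Quotient.mk J (fun s => MvPolynomial.monomial m (rep (p.coeff m) s)) := by
      intro m _
      rw [← hrep (p.coeff m), hmon, hrep]
    rw [Finset.sum_congr rfl h1, ← map_sum]
    congr 1
    funext s
    rw [Finset.sum_apply]
  have hFamdeg : ∀ p s, (Fam p s).totalDegree ≤ p.totalDegree := by
    intro p s
    refine le_trans (MvPolynomial.totalDegree_finset_sum _ _) ?_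
    refine Finset.sup_le fun m hm => ?_
    exact le_trans (MvPolynomial.totalDegree_monomial_le m _) (MvPolynomial.le_totalDegree hm)
  have hcoeffFam : ∀ p (m : Fin (n + 1) →₀ ℕ) s, m ∈ p.support →
      (Fam p s).coeff m = rep (p.coeff m) s := by
    intro p m s hm
    rw [hFam]
    simp only [MvPolynomial.coeff_sum, MvPolynomial.coeff_monomial]
    rw [Finset.sum_ite_eq' p.support m (fun m' => rep (p.coeff m') s), if_pos hm]
  refine ⟨φ, ?_, hC, hX, ?_⟩
  · -- injectivity
    rw [injective_iff_map_eq_zero]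
    intro p hp
    rw [hphiFam, Ideal.Quotient.eq_zero_iff_mem] at hp
    ext m
    rw [MvPolynomial.coeff_zero]
    by_cases hm : m ∈ p.support
    · have hmem : rep (p.coeff m) ∈ I := by
        refine Filter.mem_of_superset hp fun s hs => ?_
        have hs0 : Fam p s = 0 := hs
        have := hcoeffFam p m s hm
        rw [hs0, MvPolynomial.coeff_zero] at this
        exact this.symm
      rw [← hrep (p.coeff m), Ideal.Quotient.eq_zero_iff_mem]
      exact hmem
    · exact MvPolynomial.notMem_support_iff.mp hm
  · -- range
    ext q
    constructor
    · rintro ⟨p, rfl⟩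
      exact ⟨Fam p, (hphiFam p).symm, p.totalDegree,
        Filter.univ_mem' fun s => hFamdeg p s⟩
    · rintro ⟨f, rfl, d, hd⟩
      set D : Fin (n + 1) →₀ ℕ := Finsupp.equivFunOnFinite.symm (fun _ => d) with hD
      set p : MvPolynomial (Fin (n + 1)) ((∀ s, k s) ⧸ I) :=
        ∑ m ∈ Finset.Iic D, MvPolynomial.monomial m
          (Ideal.Quotient.mk I (fun s => (f s).coeff m)) with hp
      refine ⟨p, ?_⟩
      rw [hp, map_sum]
      have h1 : ∀ m ∈ Finset.Iic D,
          φ (MvPolynomial.monomial m (Ideal.Quotient.mk I (fun s => (f s).coeff m))) =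
            Ideal.Quotient.mk J (fun s => MvPolynomial.monomial m ((f s).coeff m)) := by
        intro m _
        rw [hmon]
      rw [Finset.sum_congr rfl h1, ← map_sum]
      rw [Ideal.Quotient.eq]
      refine Filter.mem_of_superset hd fun s hs => ?_
      have hdeg : (f s).totalDegree ≤ d := hs
      have hsub : (f s).support ⊆ Finset.Iic D := by
        intro m hm
        rw [Finset.mem_Iic]
        intro i
        have h2 : m i ≤ (m.sum fun _ e => e) := by
          by_cases hmi : m i = 0
          · simp [hmi]
          · exact Finset.single_le_sum (f := fun j => m j) (fun _ _ => Nat.zero_le _)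
              (Finsupp.mem_support_iff.mpr hmi)
        have h3 : (m.sum fun _ e => e) ≤ (f s).totalDegree := MvPolynomial.le_totalDegree hm
        have : D i = d := by simp [hD]
        omega
      have hfs : (∑ m ∈ Finset.Iic D, MvPolynomial.monomial m ((f s).coeff m)) = f s := by
        conv_rhs => rw [← (f s).support_sum_monomial_coeff]
        refine (Finset.sum_subset hsub fun m _ hm => ?_).symm
        rw [MvPolynomial.notMem_support_iff.mp hm, map_zero]
      show ((∑ m ∈ Finset.Iic D, (fun s => MvPolynomial.monomial m ((f s).coeff m))) - f) s = 0
      rw [Pi.sub_apply, Finset.sum_apply]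
      rw [hfs]
      exact sub_self _
end
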